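/- In Kretschmer's setting with α > 0: for every y ∈ dom v and every ρ > 0, the value function v is not bounded above on B(y, ρ) ∩ dom v, and B(y, ρ) contains points outside dom v; consequently the interior of dom v in L²[0,1] is empty, and the restriction of v to dom v is not continuous at any y ∈ dom v. -/

import Mathlib

open MeasureTheory

/-- Lebesgue measure on `[0,1]`. -/
noncomputable def mu : Measure ℝ := volume.restrict (Set.Icc (0 : ℝ) 1)

/-- Feasibility of `(x, r)` for the primal problem with right-hand side `y`:
`(x, r) ∈ P = L²₊ × ℝ₊` and `A(x,r) − y ∈ Q = L²₊`, where
`A(x,r)(t) = ∫_t^1 x(s) ds + r`. -/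
def Feas (y : ℝ → ℝ) (p : (ℝ → ℝ) × ℝ) : Prop :=
  MemLp p.1 2 mu ∧ (∀ᵐ t ∂mu, 0 ≤ p.1 t) ∧ 0 ≤ p.2 ∧
  ∀ᵐ t ∂mu, y t ≤ (∫ s in Set.Ioc t 1, p.1 s ∂mu) + p.2

/-- The cost `c*(x,r) = ∫_0^1 t x(t) dt + α r`. -/
noncomputable def cost (α : ℝ) (p : (ℝ → ℝ) × ℝ) : ℝ :=
  (∫ t, t * p.1 t ∂mu) + α * p.2

/-- Kretschmer's value function on `Y = L²[0,1]`. -/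
noncomputable def val (α : ℝ) (y : Lp ℝ 2 mu) : EReal :=
  ⨅ (p : (ℝ → ℝ) × ℝ) (_ : Feas (⇑y) p), ((cost α p : ℝ) : EReal)

instance : IsFiniteMeasure mu := by
  constructor
  rw [mu, Measure.restrict_apply_univ, Real.volume_Icc]
  simp

lemma ae_mem_Icc : ∀ᵐ t ∂mu, t ∈ Set.Icc (0:ℝ) 1 := by
  rw [mu]; exact ae_restrict_mem measurableSet_Icc


lemma integrable_mul_id {x : ℝ → ℝ} (hx : MemLp x 2 mu) :
    Integrable (fun s => s * x s) mu := by
  refine Integrable.bdd_mul (c := 1) (hx.integrable one_le_two) aestronglyMeasurable_id ?_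
  filter_upwards [ae_mem_Icc] with t ht
  rw [Real.norm_eq_abs, abs_le]
  constructor <;> linarith [ht.1, ht.2]

lemma integral_mul_nonneg {x : ℝ → ℝ} (hx0 : ∀ᵐ t ∂mu, 0 ≤ x t) :
    0 ≤ ∫ t, t * x t ∂mu := by
  refine integral_nonneg_of_ae ?_
  filter_upwards [ae_mem_Icc, hx0] with t ht h0
  exact mul_nonneg ht.1 h0

lemma cost_nonneg {α : ℝ} (hα : 0 ≤ α) {y : ℝ → ℝ} {p : (ℝ → ℝ) × ℝ} (hp : Feas y p) :
    0 ≤ cost α p :=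
  add_nonneg (integral_mul_nonneg hp.2.1) (mul_nonneg hα hp.2.2.1)

lemma val_nonneg {α : ℝ} (hα : 0 ≤ α) (y : Lp ℝ 2 mu) : (0 : EReal) ≤ val α y :=
  le_iInf₂ fun p hp => by exact_mod_cast EReal.coe_le_coe_iff.2 (cost_nonneg hα hp)

lemma val_lt_top_of_ae_le {α : ℝ} {y : Lp ℝ 2 mu} {C : ℝ} (h : ∀ᵐ t ∂mu, ⇑y t ≤ C) :
    val α y < ⊤ := by
  have hfeas : Feas (⇑y) ((fun _ => 0), max C 0) := by
    refine ⟨?_, ?_, le_max_right _ _, ?_⟩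
    · exact memLp_const (0:ℝ)
    · exact Filter.Eventually.of_forall fun _ => le_refl 0
    · filter_upwards [h] with t ht
      simpa using le_trans ht (le_max_left _ _)
  calc val α y ≤ ((cost α ((fun _ => 0), max C 0) : ℝ) : EReal) := iInf₂_le _ hfeas
    _ < ⊤ := EReal.coe_lt_top _

lemma feas_bound {y : ℝ → ℝ} {p : (ℝ → ℝ) × ℝ} (hp : Feas y p) :
    ∀ᵐ t ∂mu, y t ≤ (∫ s, |p.1 s| ∂mu) + p.2 := by
  have hint : Integrable p.1 mu := hp.1.integrable one_le_two
  filter_upwards [hp.2.2.2] with t ht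
  refine le_trans ht (add_le_add_left ?_ _)
  calc (∫ s in Set.Ioc t 1, p.1 s ∂mu) ≤ ∫ s in Set.Ioc t 1, |p.1 s| ∂mu := by
        refine integral_mono_ae hint.integrableOn hint.abs.integrableOn ?_
        exact Filter.Eventually.of_forall fun s => le_abs_self _
    _ ≤ ∫ s, |p.1 s| ∂mu := by
        refine setIntegral_le_integral hint.abs ?_
        exact Filter.Eventually.of_forall fun s => abs_nonneg _

lemma exists_feas_of_val_lt_top {α : ℝ} {y : Lp ℝ 2 mu} (h : val α y < ⊤) :
    ∃ p, Feas (⇑y) p := by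
  by_contra hne
  push_neg at hne
  have : val α y = ⊤ := by
    rw [val]; exact iInf_eq_top.2 fun p => iInf_eq_top.2 fun hp => absurd hp (hne p)
  exact absurd this (ne_of_lt h)

lemma exists_bound_of_val_lt_top {α : ℝ} {y : Lp ℝ 2 mu} (h : val α y < ⊤) :
    ∃ C, ∀ᵐ t ∂mu, ⇑y t ≤ C := by
  obtain ⟨p, hp⟩ := exists_feas_of_val_lt_top h
  exact ⟨_, feas_bound hp⟩

/-- helper: a nonnull set meets a conull set -/
lemma exists_mem_of_ne_zero {S G : Set ℝ} (hS : mu S ≠ 0) (hG : ∀ᵐ t ∂mu, t ∈ G) :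
    ∃ t, t ∈ S ∧ t ∈ G := by
  by_contra h
  push_neg at h
  exact hS (measure_mono_null (fun t ht => by simpa using h t ht) (ae_iff.1 hG))

lemma cost_lb {α b : ℝ} (hα : 0 < α) {y : ℝ → ℝ} {p : (ℝ → ℝ) × ℝ} (hp : Feas y p)
    (hset : mu {t | 1/2 ≤ t ∧ b ≤ y t} ≠ 0) :
    min (α * (b/2)) (b/4) ≤ cost α p := by
  obtain ⟨x, r⟩ := p
  obtain ⟨hx2, hx0, hr, hfe⟩ := hp
  simp only at hx2 hx0 hr hfe ⊢
  -- find a good point t₀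
  obtain ⟨t₀, ht₀S, ht₀G⟩ := exists_mem_of_ne_zero hset
    (hfe.mono (fun t ht => (by exact ht : t ∈ {t | y t ≤ (∫ s in Set.Ioc t 1, x s ∂mu) + r})))
  obtain ⟨ht₀half, ht₀b⟩ := ht₀S
  have hfe₀ : y t₀ ≤ (∫ s in Set.Ioc t₀ 1, x s ∂mu) + r := ht₀G
  have hmul : Integrable (fun s => s * x s) mu := integrable_mul_id hx2
  have hxint : Integrable x mu := hx2.integrable one_le_two
  set I := ∫ s, s * x s ∂mu with hI
  set J := ∫ s in Set.Ioc t₀ 1, x s ∂mu with hJ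
  have hI0 : 0 ≤ I := integral_mul_nonneg hx0
  have step1 : ∫ s in Set.Ioc t₀ 1, (1/2 : ℝ) * x s ∂mu ≤ ∫ s in Set.Ioc t₀ 1, s * x s ∂mu := by
    refine integral_mono_ae ((hxint.const_mul _).integrableOn) hmul.integrableOn ?_
    have h1 : ∀ᵐ s ∂(mu.restrict (Set.Ioc t₀ 1)), s ∈ Set.Ioc t₀ 1 :=
      ae_restrict_mem measurableSet_Ioc
    filter_upwards [h1, ae_restrict_of_ae hx0] with s hs hx0s
    exact mul_le_mul_of_nonneg_right (le_trans ht₀half (le_of_lt hs.1)) hx0s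
  have step2 : ∫ s in Set.Ioc t₀ 1, s * x s ∂mu ≤ I := by
    refine setIntegral_le_integral hmul ?_
    filter_upwards [ae_mem_Icc, hx0] with s hs h0
    exact mul_nonneg hs.1 h0
  have step3 : (1/2 : ℝ) * J ≤ I := by
    have : ∫ s in Set.Ioc t₀ 1, (1/2 : ℝ) * x s ∂mu = (1/2 : ℝ) * J := by
      rw [hJ, MeasureTheory.integral_const_mul]
    linarith [step1, step2, this.symm.le]
  have hJb : b - r ≤ J := by linarith
  rw [cost]
  rcases le_or_gt r (b/2) with hc | hc
  · refine le_trans (min_le_right _ _) ?_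
    have : b/4 ≤ (1/2) * (b - r) := by linarith
    nlinarith [mul_nonneg (le_of_lt hα) hr]
  · refine le_trans (min_le_left _ _) ?_
    nlinarith

noncomputable def hfun : ℝ → ℝ := fun t => (1 - t) ^ (-(4:ℝ)⁻¹)

lemma hfun_meas : Measurable hfun :=
  (measurable_const.sub measurable_id).pow measurable_const

lemma hfun_nonneg {t : ℝ} (ht : t ≤ 1) : 0 ≤ hfun t :=
  Real.rpow_nonneg (by linarith) _

lemma hfun_memℒp : MemLp hfun 2 mu := by
  rw [memLp_two_iff_integrable_sq hfun_meas.aestronglyMeasurable]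
  have key : IntervalIntegrable (fun s : ℝ => s ^ (-(2:ℝ)⁻¹)) volume 0 1 :=
    intervalIntegral.intervalIntegrable_rpow' (by norm_num)
  have key2 := key.comp_sub_left 1
  simp only [sub_self, sub_zero] at key2
  have key3 : IntegrableOn (fun s : ℝ => (1 - s) ^ (-(2:ℝ)⁻¹)) (Set.Ioc 0 1) volume :=
    (intervalIntegrable_iff_integrableOn_Ioc_of_le zero_le_one).1 key2.symm
  have key4 : Integrable (fun s : ℝ => (1 - s) ^ (-(2:ℝ)⁻¹)) mu := by
    rw [mu, ← Measure.restrict_congr_set Ioc_ae_eq_Icc]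
    exact key3
  refine key4.congr ?_
  filter_upwards [ae_mem_Icc] with t ht
  have h0 : (0:ℝ) ≤ 1 - t := by linarith [ht.2]
  rw [hfun, sq]
  rw [← Real.rpow_add' h0 (by norm_num : (-(4:ℝ)⁻¹) + (-(4:ℝ)⁻¹) ≠ 0)]
  norm_num

lemma hfun_ge {c t : ℝ} (hc : 1 ≤ c) (ht : 1 - c ^ (-(4:ℝ)) ≤ t) (ht1 : t < 1) :
    c ≤ hfun t := by
  have hcpos : (0:ℝ) < c := by linarith
  have h1 : (0:ℝ) < 1 - t := by linarith
  have h2 : 1 - t ≤ c ^ (-(4:ℝ)) := by linarith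
  have h3 : (c ^ (-(4:ℝ))) ^ (-(4:ℝ)⁻¹) ≤ (1 - t) ^ (-(4:ℝ)⁻¹) :=
    Real.rpow_le_rpow_of_nonpos h1 h2 (by norm_num)
  calc c = c ^ ((-(4:ℝ)) * (-(4:ℝ)⁻¹)) := by norm_num
    _ = (c ^ (-(4:ℝ))) ^ (-(4:ℝ)⁻¹) := Real.rpow_mul (le_of_lt hcpos) _ _
    _ ≤ hfun t := h3

lemma one_sub_rpow_mem {c : ℝ} (hc : 1 ≤ c) :
    0 ≤ 1 - c ^ (-(4:ℝ)) ∧ 1 - c ^ (-(4:ℝ)) < 1 := by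
  constructor
  · have := Real.rpow_le_one_of_one_le_of_nonpos hc (by norm_num : (-(4:ℝ)) ≤ 0)
    linarith
  · have := Real.rpow_pos_of_pos (by linarith : (0:ℝ) < c) (-(4:ℝ))
    linarith

lemma mu_Ico' (u : ℝ) (hu0 : 0 ≤ u) : mu (Set.Ico u 1) = ENNReal.ofReal (1 - u) := by
  rw [mu, Measure.restrict_apply measurableSet_Ico]
  rcases le_or_gt u 1 with h | h
  · rw [Set.inter_eq_left.2 (fun t ht => Set.mem_Icc.mpr ⟨le_trans hu0 ht.1, le_of_lt ht.2⟩),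
      Real.volume_Ico]
  · rw [Set.Ico_eq_empty (by linarith)]
    simp [ENNReal.ofReal_eq_zero]; linarith

/-- In every ball there is a point where the value function is `⊤`. -/
lemma exists_val_top (α : ℝ) (y : Lp ℝ 2 mu) {ρ : ℝ} (hρ : 0 < ρ) :
    ∃ y'' : Lp ℝ 2 mu, y'' ∈ Metric.ball y ρ ∧ val α y'' = ⊤ := by
  classical
  -- the function G = max 0 (hfun - y)
  set G : ℝ → ℝ := fun t => max 0 (hfun t - ⇑y t) with hGdef
  have hGaesm : AEStronglyMeasurable G mu := by
    have h1 : AEStronglyMeasurable (fun t => hfun t - ⇑y t) mu :=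
      hfun_meas.aestronglyMeasurable.sub (Lp.aestronglyMeasurable y)
    exact aestronglyMeasurable_const.sup h1
  have hGmem : MemLp G 2 mu := by
    refine MemLp.of_le (hfun_memℒp.add (Lp.memLp y).norm) hGaesm ?_
    filter_upwards [ae_mem_Icc] with t ht
    have h0 : 0 ≤ hfun t := hfun_nonneg ht.2
    have h1 : 0 ≤ hfun t + ‖⇑y t‖ := by positivity
    show ‖G t‖ ≤ ‖hfun t + ‖⇑y t‖‖
    rw [Real.norm_of_nonneg (le_max_left _ _ : (0:ℝ) ≤ G t), Real.norm_of_nonneg h1,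
      Real.norm_eq_abs]
    rcases max_cases 0 (hfun t - ⇑y t) with ⟨he, _⟩ | ⟨he, _⟩ <;> rw [he]
    · positivity
    · have := neg_abs_le (⇑y t); linarith
  -- choose δ
  obtain ⟨δ, hδpos, hδ⟩ := hGmem.eLpNorm_indicator_le one_le_two ENNReal.ofNat_ne_top
    (half_pos hρ)
  set u₀ : ℝ := max 0 (1 - δ) with hu₀def
  have hu₀0 : 0 ≤ u₀ := le_max_left _ _
  have hu₀1 : u₀ < 1 := by
    rw [hu₀def, max_lt_iff]; exact ⟨zero_lt_one, by linarith⟩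
  have hmuIco : mu (Set.Ico u₀ 1) ≤ ENNReal.ofReal δ := by
    rw [mu_Ico' u₀ hu₀0]
    refine ENNReal.ofReal_le_ofReal ?_
    rcases le_or_gt δ 1 with h | h
    · have : 1 - δ ≤ u₀ := le_max_right _ _
      linarith
    · linarith [hu₀0]
  set g : ℝ → ℝ := (Set.Ico u₀ 1).indicator G with hgdef
  have hgmem : MemLp g 2 mu := hGmem.indicator measurableSet_Ico
  have hgnorm : eLpNorm g 2 mu ≤ ENNReal.ofReal (ρ/2) :=
    hδ _ measurableSet_Ico hmuIco
  set y'' : Lp ℝ 2 mu := y + hgmem.toLp g with hy''def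
  refine ⟨y'', ?_, ?_⟩
  · rw [Metric.mem_ball, dist_eq_norm, hy''def, add_sub_cancel_left,
      Lp.norm_toLp g hgmem]
    calc (eLpNorm g 2 mu).toReal ≤ (ENNReal.ofReal (ρ/2)).toReal :=
          ENNReal.toReal_mono ENNReal.ofReal_ne_top hgnorm
      _ = ρ/2 := ENNReal.toReal_ofReal (by linarith)
      _ < ρ := by linarith
  · by_contra hne
    have hlt : val α y'' < ⊤ := lt_of_le_of_ne le_top hne
    obtain ⟨C, hC⟩ := exists_bound_of_val_lt_top hlt
    set c : ℝ := max 1 (C + 1) with hcdef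
    have hc1 : 1 ≤ c := le_max_left _ _
    set u₁ : ℝ := max u₀ (1 - c ^ (-(4:ℝ))) with hu₁def
    have hu₁0 : 0 ≤ u₁ := le_trans hu₀0 (le_max_left _ _)
    have hu₁1 : u₁ < 1 := by
      rw [hu₁def, max_lt_iff]
      exact ⟨hu₀1, (one_sub_rpow_mem hc1).2⟩
    have hmu1 : mu (Set.Ico u₁ 1) ≠ 0 := by
      rw [mu_Ico' u₁ hu₁0]
      simp only [ne_eq, ENNReal.ofReal_eq_zero, not_le]
      linarith
    -- a.e. identity for y''
    have heq : ∀ᵐ t ∂mu, ⇑y'' t = ⇑y t + g t := by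
      filter_upwards [Lp.coeFn_add y (hgmem.toLp g), hgmem.coeFn_toLp] with t h1 h2
      rw [hy''def, h1]; simp [h2]
    obtain ⟨t₀, ht₀S, ht₀G⟩ := exists_mem_of_ne_zero hmu1
      (G := {t | ⇑y'' t = ⇑y t + g t ∧ ⇑y'' t ≤ C})
      (by filter_upwards [heq, hC] with t h1 h2; exact ⟨h1, h2⟩)
    obtain ⟨hteq, htC⟩ := ht₀G
    have ht01 : t₀ < 1 := ht₀S.2
    have ht0u : u₁ ≤ t₀ := ht₀S.1
    have htIco : t₀ ∈ Set.Ico u₀ 1 := ⟨le_trans (le_max_left _ _) ht0u, ht01⟩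
    have hgval : g t₀ = max 0 (hfun t₀ - ⇑y t₀) := by
      rw [hgdef, Set.indicator_of_mem htIco]
    have hhge : c ≤ hfun t₀ :=
      hfun_ge hc1 (le_trans (le_max_right _ _) ht0u) ht01
    have : ⇑y'' t₀ = max (⇑y t₀) (hfun t₀) := by
      rw [hteq, hgval]
      rcases le_total (hfun t₀ - ⇑y t₀) 0 with h | h
      · rw [max_eq_left h, max_eq_left] <;> linarith
      · rw [max_eq_right h, max_eq_right] <;> linarith
    have hge : C + 1 ≤ ⇑y'' t₀ := by
      have h2 : C + 1 ≤ c := le_max_right _ _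
      have h3 : hfun t₀ ≤ max (⇑y t₀) (hfun t₀) := le_max_right _ _
      linarith [this ▸ (le_trans (le_trans h2 hhge) h3)]
    linarith

lemma mu_Ioc_half : mu (Set.Ioc (1/2 : ℝ) (3/4)) = ENNReal.ofReal (1/4) := by
  rw [mu, Measure.restrict_apply measurableSet_Ioc,
    Set.inter_eq_left.2 (fun t ht => Set.mem_Icc.mpr
      ⟨by rcases ht with ⟨h1, h2⟩; linarith, by rcases ht with ⟨h1, h2⟩; linarith⟩),
    Real.volume_Ioc]
  norm_num

lemma mu_le_volume (s : Set ℝ) : mu s ≤ volume s := by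
  rw [mu]; exact Measure.restrict_le_self s

/-- a subset of small positive measure inside a nonnull set -/
lemma exists_small_subset {E : Set ℝ} (hE : MeasurableSet E) (hE2 : E ⊆ Set.Ioc (1/2 : ℝ) (3/4))
    (hEne : mu E ≠ 0) {ε : ℝ} (hε : 0 < ε) :
    ∃ F : Set ℝ, MeasurableSet F ∧ F ⊆ E ∧ mu F ≠ 0 ∧ (mu F).toReal ≤ ε := by
  set f : ℝ → ℝ := fun u => (mu (E ∩ Set.Ioc (1/2 : ℝ) u)).toReal with hfdef
  have hfin : ∀ s : Set ℝ, mu s ≠ ⊤ := fun s => measure_ne_top mu s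
  have key : ∀ u v : ℝ, v ≤ u → f u ≤ f v + (u - v) := by
    intro u v hvu
    have hsub : E ∩ Set.Ioc (1/2 : ℝ) u ⊆ (E ∩ Set.Ioc (1/2 : ℝ) v) ∪ Set.Ioc v u := by
      intro t ⟨htE, ht1, ht2⟩
      rcases le_or_gt t v with h | h
      · exact Or.inl ⟨htE, ht1, h⟩
      · exact Or.inr ⟨h, ht2⟩
    have h1 : mu (E ∩ Set.Ioc (1/2 : ℝ) u) ≤ mu (E ∩ Set.Ioc (1/2 : ℝ) v) + ENNReal.ofReal (u - v) := by
      refine le_trans (measure_mono hsub) (le_trans (measure_union_le _ _) ?_)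
      refine add_le_add_right (le_trans (mu_le_volume _) ?_) _
      rw [Real.volume_Ioc]
    calc f u ≤ (mu (E ∩ Set.Ioc (1/2 : ℝ) v) + ENNReal.ofReal (u - v)).toReal :=
          ENNReal.toReal_mono (by
            exact ENNReal.add_ne_top.2 ⟨hfin _, ENNReal.ofReal_ne_top⟩) h1
      _ = f v + (u - v) := by
          rw [ENNReal.toReal_add (hfin _) ENNReal.ofReal_ne_top,
            ENNReal.toReal_ofReal (by linarith)]
  have hmono : ∀ u v : ℝ, v ≤ u → f v ≤ f u := by
    intro u v hvu
    exact ENNReal.toReal_mono (hfin _)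
      (measure_mono (Set.inter_subset_inter_right _ (Set.Ioc_subset_Ioc_right hvu)))
  have hcont : Continuous f := by
    refine (LipschitzWith.continuous (K := 1) ?_)
    rw [lipschitzWith_iff_dist_le_mul]
    intro u v
    rw [Real.dist_eq, Real.dist_eq, NNReal.coe_one, one_mul, abs_sub_le_iff]
    rcases le_total v u with h | h
    · constructor
      · have := key u v h; have := abs_of_nonneg (by linarith : (0:ℝ) ≤ u - v); linarith
      · have := hmono u v h; have := abs_of_nonneg (by linarith : (0:ℝ) ≤ u - v); linarith
    · constructor
      · have := hmono v u h; have := abs_of_nonpos (by linarith : u - v ≤ 0); linarith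
      · have := key v u h; have := abs_of_nonpos (by linarith : u - v ≤ 0); linarith
  have hhalf : f (1/2) = 0 := by
    rw [hfdef]; simp
  have hE34 : E ∩ Set.Ioc (1/2 : ℝ) (3/4) = E := Set.inter_eq_left.2 hE2
  have h34 : 0 < f (3/4) := by
    rw [hfdef]
    simp only [hE34]
    exact ENNReal.toReal_pos hEne (hfin _)
  set m : ℝ := min (ε/2) (f (3/4)) with hmdef
  have hm0 : 0 < m := lt_min (by linarith) h34
  have hmem : m ∈ Set.Icc (f (1/2)) (f (3/4)) := by
    rw [hhalf]
    exact ⟨le_of_lt hm0, min_le_right _ _⟩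
  obtain ⟨u, _, hu⟩ := intermediate_value_Icc (by norm_num : (1/2:ℝ) ≤ 3/4)
    hcont.continuousOn hmem
  refine ⟨E ∩ Set.Ioc (1/2 : ℝ) u, hE.inter measurableSet_Ioc, Set.inter_subset_left, ?_, ?_⟩
  · intro h0
    rw [hfdef] at hu
    simp only [h0, ENNReal.toReal_zero] at hu
    linarith
  · have : (mu (E ∩ Set.Ioc (1/2 : ℝ) u)).toReal = m := hu
    rw [this, hmdef]
    exact le_trans (min_le_left _ _) (by linarith)

/-- In every ball around a point of the domain there are points of the domain with
arbitrarily large value. -/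
lemma exists_val_large {α : ℝ} (hα : 0 < α) {y : Lp ℝ 2 mu} (hdom : val α y < ⊤)
    {ρ : ℝ} (hρ : 0 < ρ) (M : ℝ) :
    ∃ y' : Lp ℝ 2 mu, y' ∈ Metric.ball y ρ ∧ val α y' < ⊤ ∧ (M : EReal) < val α y' := by
  classical
  obtain ⟨C₀, hC₀⟩ := exists_bound_of_val_lt_top hdom
  -- measurable representative
  set Y : ℝ → ℝ := (Lp.aestronglyMeasurable y).mk (⇑y) with hYdef
  have hYm : Measurable Y := (Lp.aestronglyMeasurable y).measurable_mk
  have hYae : ⇑y =ᵐ[mu] Y := (Lp.aestronglyMeasurable y).ae_eq_mk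
  -- find K
  have hSne : mu (Set.Ioc (1/2 : ℝ) (3/4)) ≠ 0 := by
    rw [mu_Ioc_half]; simp
  obtain ⟨K, hK⟩ : ∃ K : ℕ, mu (Set.Ioc (1/2 : ℝ) (3/4) ∩ {t | -(K:ℝ) ≤ Y t}) ≠ 0 := by
    by_contra hcon
    push_neg at hcon
    refine hSne (measure_mono_null (fun t ht => ?_) (measure_iUnion_null hcon))
    obtain ⟨n, hn⟩ := exists_nat_ge (-(Y t))
    exact Set.mem_iUnion.2 ⟨n, ht, by simpa using neg_le.1 (by linarith : -(Y t) ≤ n)⟩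
  set E₁ : Set ℝ := Set.Ioc (1/2 : ℝ) (3/4) ∩ {t | -(K:ℝ) ≤ Y t} with hE₁def
  have hE₁meas : MeasurableSet E₁ := measurableSet_Ioc.inter (hYm measurableSet_Ici)
  -- parameters
  set b : ℝ := max (2*(M+1)/α) (4*(M+1)) with hbdef
  set c : ℝ := b + K with hcdef
  set d : ℝ := ρ / (2*(|c|+1)) with hddef
  have hd0 : 0 < d := by
    rw [hddef]; positivity
  obtain ⟨F, hFmeas, hFsub, hFne, hFsmall⟩ :=
    exists_small_subset hE₁meas Set.inter_subset_left hK (mul_pos hd0 hd0)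
  have hFfin : mu F ≠ ⊤ := measure_ne_top mu F
  set z : Lp ℝ 2 mu := indicatorConstLp 2 hFmeas hFfin c with hzdef
  set y' : Lp ℝ 2 mu := y + z with hy'def
  have hznorm : ‖z‖ < ρ := by
    rw [hzdef, norm_indicatorConstLp two_ne_zero ENNReal.ofNat_ne_top]
    have htr : (2:ENNReal).toReal = 2 := by simp
    rw [htr]
    have h1 : ((mu F).toReal) ^ (1/(2:ℝ)) ≤ d := by
      calc ((mu F).toReal) ^ (1/(2:ℝ)) ≤ (d*d) ^ (1/(2:ℝ)) :=
            Real.rpow_le_rpow ENNReal.toReal_nonneg hFsmall (by norm_num)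
        _ = d := by
            rw [← Real.sqrt_eq_rpow, Real.sqrt_mul_self (le_of_lt hd0)]
    calc ‖c‖ * ((mu F).toReal) ^ (1/(2:ℝ)) ≤ ‖c‖ * d :=
          mul_le_mul_of_nonneg_left h1 (norm_nonneg c)
      _ < ρ := by
          rw [Real.norm_eq_abs]
          have h5 : |c| * d < (|c|+1) * d := mul_lt_mul_of_pos_right (lt_add_one _) hd0
          have h6 : (|c|+1) * d = ρ/2 := by
            rw [hddef]
            have : |c| + 1 ≠ 0 := by positivity
            field_simp
          linarith
  have heq : ∀ᵐ t ∂mu, ⇑y' t = ⇑y t + Set.indicator F (fun _ => c) t := by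
    have hic : ⇑z =ᵐ[mu] Set.indicator F (fun _ => c) := indicatorConstLp_coeFn
    filter_upwards [Lp.coeFn_add y z, hic] with t h1 h2
    rw [hy'def, h1, Pi.add_apply, h2]
  refine ⟨y', Metric.mem_ball.2 (by rw [dist_eq_norm, hy'def, add_sub_cancel_left]; exact hznorm), ?_, ?_⟩
  · refine val_lt_top_of_ae_le (C := C₀ + |c|) ?_
    filter_upwards [heq, hC₀] with t h1 h2
    rw [h1]
    have : Set.indicator F (fun _ => c) t ≤ |c| := by
      rcases Set.indicator_eq_zero_or_self F (fun _ => c) t with h | h <;> rw [h]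
      · positivity
      · exact le_abs_self c
    linarith
  · -- lower bound
    have hb1 : 2*(M+1)/α ≤ b := le_max_left _ _
    have hb2 : 4*(M+1) ≤ b := le_max_right _ _
    have hset : mu {t | 1/2 ≤ t ∧ b ≤ ⇑y' t} ≠ 0 := by
      have hle : mu F ≤ mu {t | 1/2 ≤ t ∧ b ≤ ⇑y' t} := by
        refine measure_mono_ae ?_
        filter_upwards [heq, hYae] with t h1 h2
        intro htF
        obtain ⟨⟨ht1, _⟩, htK⟩ := hFsub htF
        refine ⟨by linarith, ?_⟩
        rw [h1, Set.indicator_of_mem htF, h2]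
        have hc' : c = b + (K:ℝ) := hcdef
        have htK' : -(K:ℝ) ≤ Y t := htK
        linarith
      intro h0
      exact hFne (le_antisymm (h0 ▸ hle) zero_le)
    have hlow : ((min (α * (b/2)) (b/4) : ℝ) : EReal) ≤ val α y' :=
      le_iInf₂ fun p hp => EReal.coe_le_coe_iff.2 (cost_lb hα hp hset)
    have hM1 : (M:ℝ) + 1 ≤ min (α * (b/2)) (b/4) := by
      refine le_min ?_ (by linarith)
      have h3 : (M+1)/α ≤ b/2 := by
        rw [div_le_iff₀ hα] at hb1 ⊢
        linarith [hb1]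
      calc (M:ℝ) + 1 = α * ((M+1)/α) := by field_simp
        _ ≤ α * (b/2) := mul_le_mul_of_nonneg_left h3 (le_of_lt hα)
    calc (M : EReal) < ((M + 1 : ℝ) : EReal) := EReal.coe_lt_coe_iff.2 (by linarith)
      _ ≤ ((min (α * (b/2)) (b/4) : ℝ) : EReal) := EReal.coe_le_coe_iff.2 hM1
      _ ≤ val α y' := hlow

/-- In Kretschmer's setting with `α > 0`, for every `y ∈ dom v` and every
`ρ > 0` the value function is unbounded above on `B(y,ρ) ∩ dom v` and `B(y,ρ)` meets
the complement of `dom v`; consequently `dom v` has empty interior and the restriction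
of `v` to `dom v` is continuous at no point of `dom v`. -/
theorem stmt16 (α : ℝ) (hα : 0 < α) :
    (∀ y : Lp ℝ 2 mu, val α y < ⊤ → ∀ ρ : ℝ, 0 < ρ →
      (∀ M : ℝ, ∃ y' : Lp ℝ 2 mu, y' ∈ Metric.ball y ρ ∧ val α y' < ⊤ ∧
        (M : EReal) < val α y') ∧
      (∃ y'' : Lp ℝ 2 mu, y'' ∈ Metric.ball y ρ ∧ val α y'' = ⊤)) ∧
    interior {y : Lp ℝ 2 mu | val α y < ⊤} = ∅ ∧
    (∀ y : Lp ℝ 2 mu, val α y < ⊤ →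
      ¬ ContinuousWithinAt (val α) {y' : Lp ℝ 2 mu | val α y' < ⊤} y) := by
  have clause1 : ∀ y : Lp ℝ 2 mu, val α y < ⊤ → ∀ ρ : ℝ, 0 < ρ →
      (∀ M : ℝ, ∃ y' : Lp ℝ 2 mu, y' ∈ Metric.ball y ρ ∧ val α y' < ⊤ ∧
        (M : EReal) < val α y') ∧
      (∃ y'' : Lp ℝ 2 mu, y'' ∈ Metric.ball y ρ ∧ val α y'' = ⊤) := by
    intro y hy ρ hρ
    exact ⟨fun M => exists_val_large hα hy hρ M, exists_val_top α y hρ⟩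
  refine ⟨clause1, ?_, ?_⟩
  · rw [Set.eq_empty_iff_forall_notMem]
    intro y hy
    have hyD : y ∈ {y : Lp ℝ 2 mu | val α y < ⊤} := interior_subset hy
    rw [Set.mem_setOf_eq] at hyD
    rw [mem_interior_iff_mem_nhds, Metric.mem_nhds_iff] at hy
    obtain ⟨ρ, hρ, hball⟩ := hy
    obtain ⟨y'', hmem, htop⟩ := (clause1 y hyD ρ hρ).2
    have : val α y'' < ⊤ := hball hmem
    rw [htop] at this
    exact lt_irrefl _ this
  · intro y hy hcont
    set v₀ := val α y with hv₀
    have hne_top : v₀ ≠ ⊤ := ne_of_lt hy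
    have hne_bot : v₀ ≠ ⊥ := by
      refine ne_of_gt (lt_of_lt_of_le ?_ (val_nonneg (le_of_lt hα) y))
      exact EReal.bot_lt_zero
    set r : ℝ := v₀.toReal with hrdef
    have hcoe : (r : EReal) = v₀ := EReal.coe_toReal hne_top hne_bot
    have hmem : v₀ ∈ Set.Iio (((r + 1 : ℝ) : EReal)) := by
      rw [Set.mem_Iio, ← hcoe]
      exact_mod_cast EReal.coe_lt_coe_iff.2 (lt_add_one r)
    have hpre := hcont (isOpen_Iio.mem_nhds hmem)
    rw [Filter.mem_map, Metric.mem_nhdsWithin_iff] at hpre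
    obtain ⟨ρ, hρ, hsub⟩ := hpre
    obtain ⟨y', hball, hdom', hgt⟩ := (clause1 y hy ρ hρ).1 (r + 1)
    have : val α y' ∈ Set.Iio (((r + 1 : ℝ) : EReal)) := hsub ⟨hball, hdom'⟩
    rw [Set.mem_Iio] at this
    exact absurd hgt (not_lt.2 (le_of_lt this))
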